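/- Let f : ℝ^d → ℝ be differentiable, convex, and L-smooth with L > 0, and let η ∈ (0, 1/((L+1)·S·Q)]. Fix a point θ ∈ ℝ^d, an integer Γ ≥ 1, and block sequences k_γ^0,…,k_γ^{S−1} ∈ K for γ = 1,…,Γ. For each γ, let θ_γ be the final iterate of Markov chain coordinate descent started at θ with step size η, block sequence (k_γ^s), and Q inner updates per block, and set θ⁺ := (1/Γ)·∑_{γ=1}^{Γ} θ_γ. Then f(θ⁺) − f(θ) ≤ η·S·Q·C₁·(1 + η·(L+1)·S·Q·C₁)·‖∇f(θ)‖² + (η·(η·(L+1)·S·Q − 1)/Γ)·∑_{γ=1}^{Γ} ∑_{s=0}^{S−1} ∑_{q=0}^{Q−1} ‖∇_{k_γ^s} f(θ)‖², where C₁ := η·e·L·S·Q. -/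

import Mathlib

set_option maxHeartbeats 1000000

open RealInnerProductSpace


/-- For a block `k` (blocks given by the assignment `blk : Fin d → K` of coordinates
to blocks), the vector `∇̄_k f(v)` agreeing with the gradient of `f` at `v` on the
coordinates of block `k` and zero elsewhere.  Note `‖maskedGrad blk f v k‖ = ‖∇_k f(v)‖`. -/
noncomputable def maskedGrad {d : ℕ} {K : Type*} [DecidableEq K]
    (blk : Fin d → K) (f : EuclideanSpace ℝ (Fin d) → ℝ)
    (v : EuclideanSpace ℝ (Fin d)) (k : K) : EuclideanSpace ℝ (Fin d) :=
  WithLp.toLp 2 (fun i => if blk i = k then gradient f v i else 0)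

lemma descent_lemma {d : ℕ} (f : EuclideanSpace ℝ (Fin d) → ℝ) (L : ℝ) (hL : 0 ≤ L)
    (hdiff : Differentiable ℝ f)
    (hsmooth : ∀ x y : EuclideanSpace ℝ (Fin d),
      ‖gradient f x - gradient f y‖ ≤ L * ‖x - y‖)
    (x y : EuclideanSpace ℝ (Fin d)) :
    f y ≤ f x + ⟪gradient f x, y - x⟫ + L / 2 * ‖y - x‖ ^ 2 := by
  set u := y - x with hu
  have hgc : Continuous fun z : EuclideanSpace ℝ (Fin d) => gradient f z := by
    have : LipschitzWith ⟨L, hL⟩ fun z : EuclideanSpace ℝ (Fin d) => gradient f z := by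
      apply LipschitzWith.of_dist_le_mul
      intro a b
      have := hsmooth a b; rw [dist_eq_norm, dist_eq_norm]; exact this
    exact this.continuous
  have hφ : ∀ t : ℝ, HasDerivAt (fun t : ℝ => f (x + t • u))
      (⟪gradient f (x + t • u), u⟫) t := by
    intro t
    have hline : HasDerivAt (fun t : ℝ => x + t • u) u t := by
      simpa using ((hasDerivAt_id t).smul_const u).const_add x
    have hg := (hdiff (x + t • u)).hasGradientAt
    have := hg.hasFDerivAt.comp_hasDerivAt t hline
    exact this
  have hcont : Continuous fun t : ℝ => (⟪gradient f (x + t • u), u⟫ : ℝ) := by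
    apply Continuous.inner
    · exact hgc.comp (by continuity)
    · exact continuous_const
  have key : f (x + (1:ℝ) • u) - f (x + (0:ℝ) • u)
      = ∫ t in (0:ℝ)..1, ⟪gradient f (x + t • u), u⟫ :=
    (intervalIntegral.integral_eq_sub_of_hasDerivAt (fun t _ => hφ t)
      (hcont.intervalIntegrable 0 1)).symm
  have hcont2 : Continuous fun t : ℝ => (⟪gradient f x, u⟫ + L * ‖u‖ ^ 2 * t : ℝ) :=
    continuous_const.add (continuous_const.mul continuous_id')
  have hmono : (∫ t in (0:ℝ)..1, ⟪gradient f (x + t • u), u⟫)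
      ≤ ∫ t in (0:ℝ)..1, (⟪gradient f x, u⟫ + L * ‖u‖ ^ 2 * t) := by
    apply intervalIntegral.integral_mono_on (by norm_num) (hcont.intervalIntegrable 0 1)
      (hcont2.intervalIntegrable 0 1)
    intro t ht
    have h1 : (⟪gradient f (x + t • u), u⟫ : ℝ)
        = ⟪gradient f x, u⟫ + ⟪gradient f (x + t • u) - gradient f x, u⟫ := by
      rw [inner_sub_left]; ring
    have h2 := real_inner_le_norm (gradient f (x + t • u) - gradient f x) u
    have h3 := hsmooth (x + t • u) x
    have h4 : ‖x + t • u - x‖ = t * ‖u‖ := by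
      simp [norm_smul, abs_of_nonneg ht.1]
    rw [h4] at h3
    nlinarith [norm_nonneg u, norm_nonneg (gradient f (x + t • u) - gradient f x)]
  have hval : (∫ t in (0:ℝ)..1, (⟪gradient f x, u⟫ + L * ‖u‖ ^ 2 * t))
      = ⟪gradient f x, u⟫ + L / 2 * ‖u‖ ^ 2 := by
    rw [intervalIntegral.integral_add intervalIntegrable_const
      (Continuous.intervalIntegrable
        (by fun_prop : Continuous (fun t : ℝ => L * ‖u‖ ^ 2 * t)) 0 1)]
    rw [intervalIntegral.integral_const_mul]
    simp [integral_id]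
    ring
  have h0 : x + (0:ℝ) • u = x := by simp
  have h1 : x + (1:ℝ) • u = y := by simp [hu]
  rw [h0, h1] at key
  have := hmono.trans_eq hval
  linarith [key ▸ this]

lemma norm_le_of_comp {d : ℕ} (m g : EuclideanSpace ℝ (Fin d))
    (h : ∀ i, m i = g i ∨ m i = 0) : ‖m‖ ≤ ‖g‖ := by
  rw [EuclideanSpace.norm_eq, EuclideanSpace.norm_eq]
  apply Real.sqrt_le_sqrt
  apply Finset.sum_le_sum
  intro i _
  rcases h i with h | h
  · rw [h]
  · rw [h]; simp; positivity

lemma maskedGrad_norm_le {d : ℕ} {K : Type*} [DecidableEq K]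
    (blk : Fin d → K) (f : EuclideanSpace ℝ (Fin d) → ℝ)
    (a : EuclideanSpace ℝ (Fin d)) (k : K) :
    ‖maskedGrad blk f a k‖ ≤ ‖gradient f a‖ := by
  apply norm_le_of_comp
  intro i
  by_cases h : blk i = k <;> simp [maskedGrad, h]

lemma maskedGrad_sub_norm_le {d : ℕ} {K : Type*} [DecidableEq K]
    (blk : Fin d → K) (f : EuclideanSpace ℝ (Fin d) → ℝ)
    (a b : EuclideanSpace ℝ (Fin d)) (k : K) :
    ‖maskedGrad blk f a k - maskedGrad blk f b k‖ ≤ ‖gradient f a - gradient f b‖ := by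
  apply norm_le_of_comp
  intro i
  have : (maskedGrad blk f a k - maskedGrad blk f b k) i
      = maskedGrad blk f a k i - maskedGrad blk f b k i := rfl
  have h2 : (gradient f a - gradient f b) i = gradient f a i - gradient f b i := rfl
  by_cases h : blk i = k <;> simp [this, h2, maskedGrad, h]

lemma maskedGrad_inner {d : ℕ} {K : Type*} [DecidableEq K]
    (blk : Fin d → K) (f : EuclideanSpace ℝ (Fin d) → ℝ)
    (θ : EuclideanSpace ℝ (Fin d)) (k : K) :
    (⟪gradient f θ, maskedGrad blk f θ k⟫ : ℝ) = ‖maskedGrad blk f θ k‖ ^ 2 := by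
  rw [← real_inner_self_eq_norm_sq]
  simp only [PiLp.inner_apply, RCLike.inner_apply, conj_trivial]
  apply Finset.sum_congr rfl
  intro i _
  by_cases h : blk i = k <;> simp [maskedGrad, h]

lemma sum_range_mul {M : Type*} [AddCommMonoid M] (S Q : ℕ) (hQ : 0 < Q) (h : ℕ → ℕ → M) :
    ∑ t ∈ Finset.range (S * Q), h (t / Q) (t % Q)
      = ∑ s ∈ Finset.range S, ∑ q ∈ Finset.range Q, h s q := by
  induction S with
  | zero => simp
  | succ S ih =>
    rw [Finset.sum_range_succ, ← ih, Nat.succ_mul, Finset.sum_range_add]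
    congr 1
    apply Finset.sum_congr rfl
    intro x hx
    have hxQ : x < Q := Finset.mem_range.mp hx
    have e1 : (S * Q + x) / Q = S := by
      rw [Nat.add_comm, Nat.mul_comm, Nat.add_mul_div_left _ _ hQ, Nat.div_eq_of_lt hxQ,
        Nat.zero_add]
    have e2 : (S * Q + x) % Q = x := by
      rw [Nat.add_comm, Nat.mul_comm, Nat.add_mul_mod_self_left, Nat.mod_eq_of_lt hxQ]
    rw [e1, e2]

lemma per_run {d : ℕ} {K : Type*} [DecidableEq K]
    (blk : Fin d → K) (f : EuclideanSpace ℝ (Fin d) → ℝ) (L : ℝ) (hL : 0 < L)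
    (hdiff : Differentiable ℝ f)
    (hsmooth : ∀ x y : EuclideanSpace ℝ (Fin d),
      ‖gradient f x - gradient f y‖ ≤ L * ‖x - y‖)
    (T : ℕ) (η : ℝ) (hη : 0 < η) (hηT : η * ((L + 1) * T) ≤ 1)
    (θ : EuclideanSpace ℝ (Fin d)) (k : ℕ → K) (u : ℕ → EuclideanSpace ℝ (Fin d))
    (h0 : u 0 = θ)
    (hrec : ∀ t < T, u (t + 1) = u t - η • maskedGrad blk f (u t) (k t))
    (C₁ : ℝ) (hC₁ : C₁ = η * Real.exp 1 * L * T) :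
    f (u T) - f θ
      ≤ η * T * C₁ * (1 + η * (L + 1) * T * C₁) * ‖gradient f θ‖ ^ 2
        + η * (η * (L + 1) * T - 1) * ∑ t ∈ Finset.range T, ‖maskedGrad blk f θ (k t)‖ ^ 2 := by
  obtain ⟨G, hGdef⟩ : ∃ G, ‖gradient f θ‖ = G := ⟨_, rfl⟩
  rw [hGdef]
  have hG : 0 ≤ G := hGdef ▸ norm_nonneg _
  have hT0 : (0:ℝ) ≤ (T:ℝ) := Nat.cast_nonneg T
  have hA1 : (1:ℝ) ≤ 1 + η * L := by nlinarith
  have hA0 : (0:ℝ) ≤ 1 + η * L := by linarith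
  -- gradient norm bound
  have hgnorm : ∀ z, ‖gradient f z‖ ≤ G + L * ‖z - θ‖ := by
    intro z
    have h1 := hsmooth z θ
    have h2 := norm_sub_norm_le (gradient f z) (gradient f θ)
    rw [← hGdef]; linarith
  -- one-step distance growth
  have hstep : ∀ t, t < T → ‖u (t + 1) - θ‖ ≤ (1 + η * L) * ‖u t - θ‖ + η * G := by
    intro t ht
    rw [hrec t ht]
    have h1 : ‖u t - η • maskedGrad blk f (u t) (k t) - θ‖
        ≤ ‖u t - θ‖ + η * ‖maskedGrad blk f (u t) (k t)‖ := by
      have he : u t - η • maskedGrad blk f (u t) (k t) - θ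
          = (u t - θ) - η • maskedGrad blk f (u t) (k t) := by abel
      rw [he]
      calc ‖(u t - θ) - η • maskedGrad blk f (u t) (k t)‖
          ≤ ‖u t - θ‖ + ‖η • maskedGrad blk f (u t) (k t)‖ := norm_sub_le _ _
        _ = ‖u t - θ‖ + η * ‖maskedGrad blk f (u t) (k t)‖ := by
            rw [norm_smul, Real.norm_eq_abs, abs_of_pos hη]
    have h2 : ‖maskedGrad blk f (u t) (k t)‖ ≤ G + L * ‖u t - θ‖ :=
      (maskedGrad_norm_le blk f (u t) (k t)).trans (hgnorm _)
    nlinarith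
  -- distance bound by induction
  have hdist : ∀ t, t ≤ T → ‖u t - θ‖ ≤ η * G * t * (1 + η * L) ^ t := by
    intro t
    induction t with
    | zero => intro _; simp [h0]
    | succ t ih =>
      intro htT
      have ht : t < T := htT
      have iht := ih ht.le
      have hst := hstep t ht
      have hp1 : (1:ℝ) ≤ (1 + η * L) ^ (t + 1) := one_le_pow₀ hA1
      have hpow : (0:ℝ) ≤ (1 + η * L) ^ t := pow_nonneg hA0 t
      have hmul : (1 + η * L) * ‖u t - θ‖ ≤ (1 + η * L) * (η * G * t * (1 + η * L) ^ t) :=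
        mul_le_mul_of_nonneg_left iht hA0
      have hgeq : (1 + η * L) * ((1 + η * L) ^ t) = (1 + η * L) ^ (t + 1) := (pow_succ' _ _).symm
      have hηG : η * G ≤ η * G * (1 + η * L) ^ (t + 1) := by
        nlinarith [mul_nonneg (mul_nonneg hη.le hG) (sub_nonneg.mpr hp1)]
      have key2 : (1 + η * L) * (η * G * ↑t * (1 + η * L) ^ t)
          = η * G * ↑t * (1 + η * L) ^ (t + 1) := by rw [← hgeq]; ring
      push_cast
      nlinarith [hmul, hst, hηG, key2]
  -- exp bound
  have hdistT : ∀ t, t ≤ T → ‖u t - θ‖ ≤ η * G * T * Real.exp 1 := by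
    intro t htT
    have htr : (t:ℝ) ≤ T := by exact_mod_cast htT
    have h1 : (1 + η * L) ^ t ≤ Real.exp (η * L) ^ t := by
      apply pow_le_pow_left₀ hA0
      linarith [Real.add_one_le_exp (η * L)]
    have h2 : Real.exp (η * L) ^ t = Real.exp (t * (η * L)) := by
      rw [← Real.exp_nat_mul]
    have h3 : Real.exp (t * (η * L)) ≤ Real.exp 1 := by
      apply Real.exp_le_exp.mpr
      nlinarith
    have h4 : (1 + η * L) ^ t ≤ Real.exp 1 := by rw [h2] at h1; linarith
    have h5 := hdist t htT
    have hpow : (0:ℝ) ≤ (1 + η * L) ^ t := pow_nonneg hA0 t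
    nlinarith [mul_le_mul_of_nonneg_left h4 (by positivity : (0:ℝ) ≤ η * G * t),
      mul_le_mul_of_nonneg_right (mul_le_mul_of_nonneg_left htr (by positivity : (0:ℝ) ≤ η * G))
        (Real.exp_pos 1).le]
  -- error bound
  have herr : ∀ t, t < T →
      ‖maskedGrad blk f (u t) (k t) - maskedGrad blk f θ (k t)‖ ≤ C₁ * G := by
    intro t ht
    have h1 := maskedGrad_sub_norm_le blk f (u t) θ (k t)
    have h2 := hsmooth (u t) θ
    have h3 := hdistT t ht.le
    rw [hC₁]
    nlinarith [Real.exp_pos 1]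
  -- telescoping
  have tele : ∀ t, t ≤ T →
      u t = θ - η • ∑ r ∈ Finset.range t, maskedGrad blk f (u r) (k r) := by
    intro t
    induction t with
    | zero => intro _; simp [h0]
    | succ t ih =>
      intro htT
      have ht : t < T := htT
      rw [hrec t ht, Finset.sum_range_succ, smul_add, ← sub_sub, ih ht.le]
  obtain ⟨D, hDdef⟩ : ∃ D, ∑ r ∈ Finset.range T, maskedGrad blk f (u r) (k r) = D := ⟨_, rfl⟩
  obtain ⟨Mt, hMtdef⟩ :
      ∃ Mt, ∑ t ∈ Finset.range T, ‖maskedGrad blk f θ (k t)‖ ^ 2 = Mt := ⟨_, rfl⟩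
  rw [hMtdef]
  have hMt : 0 ≤ Mt := hMtdef ▸ Finset.sum_nonneg fun t _ => sq_nonneg _
  -- Cauchy-Schwarz bound on ‖D‖²
  have hDn : ‖D‖ ^ 2 ≤ (T:ℝ) * ∑ t ∈ Finset.range T, ‖maskedGrad blk f (u t) (k t)‖ ^ 2 := by
    have h1 : ‖D‖ ≤ ∑ t ∈ Finset.range T, ‖maskedGrad blk f (u t) (k t)‖ :=
      hDdef ▸ norm_sum_le _ _
    have h2 := Finset.sum_mul_sq_le_sq_mul_sq (Finset.range T) (fun _ => (1:ℝ))
      (fun t => ‖maskedGrad blk f (u t) (k t)‖)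
    simp only [one_mul, one_pow, Finset.sum_const, Finset.card_range, nsmul_eq_mul,
      mul_one] at h2
    calc ‖D‖ ^ 2 ≤ (∑ t ∈ Finset.range T, ‖maskedGrad blk f (u t) (k t)‖) ^ 2 :=
          pow_le_pow_left₀ (norm_nonneg D) h1 2
      _ ≤ (T:ℝ) * ∑ t ∈ Finset.range T, ‖maskedGrad blk f (u t) (k t)‖ ^ 2 := h2
  -- per-term square bound
  have hδsq : ∀ t, t < T → ‖maskedGrad blk f (u t) (k t)‖ ^ 2
      ≤ 2 * ‖maskedGrad blk f θ (k t)‖ ^ 2 + 2 * (C₁ * G) ^ 2 := by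
    intro t ht
    have htr : ‖maskedGrad blk f (u t) (k t)‖ ≤ ‖maskedGrad blk f θ (k t)‖ + C₁ * G := by
      have := norm_sub_norm_le (maskedGrad blk f (u t) (k t)) (maskedGrad blk f θ (k t))
      linarith [herr t ht]
    obtain ⟨a, ha⟩ : ∃ a, ‖maskedGrad blk f (u t) (k t)‖ = a := ⟨_, rfl⟩
    obtain ⟨b, hb⟩ : ∃ b, ‖maskedGrad blk f θ (k t)‖ = b := ⟨_, rfl⟩
    have ha0 : 0 ≤ a := ha ▸ norm_nonneg _
    have hb0 : 0 ≤ b := hb ▸ norm_nonneg _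
    have hc0 : 0 ≤ C₁ * G := le_trans (norm_nonneg _) (herr t ht)
    rw [ha, hb] at htr ⊢
    have h2 : a ^ 2 ≤ (b + C₁ * G) ^ 2 := by nlinarith [htr, ha0, hb0, hc0]
    nlinarith [h2, sq_nonneg (b - C₁ * G)]
  have hNsum : ∑ t ∈ Finset.range T, ‖maskedGrad blk f (u t) (k t)‖ ^ 2
      ≤ 2 * Mt + (T:ℝ) * (2 * (C₁ * G) ^ 2) := by
    calc ∑ t ∈ Finset.range T, ‖maskedGrad blk f (u t) (k t)‖ ^ 2
        ≤ ∑ t ∈ Finset.range T,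
            (2 * ‖maskedGrad blk f θ (k t)‖ ^ 2 + 2 * (C₁ * G) ^ 2) :=
          Finset.sum_le_sum fun t ht => hδsq t (Finset.mem_range.mp ht)
      _ = 2 * Mt + (T:ℝ) * (2 * (C₁ * G) ^ 2) := by
          rw [Finset.sum_add_distrib, ← Finset.mul_sum, Finset.sum_const, Finset.card_range,
            nsmul_eq_mul, hMtdef]
  -- inner product lower bound
  have hinlb' : ∀ t, t < T → ‖maskedGrad blk f θ (k t)‖ ^ 2 - C₁ * G ^ 2
      ≤ ⟪gradient f θ, maskedGrad blk f (u t) (k t)⟫ := by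
    intro t ht
    have hdec : maskedGrad blk f (u t) (k t)
        = maskedGrad blk f θ (k t)
          + (maskedGrad blk f (u t) (k t) - maskedGrad blk f θ (k t)) := by abel
    rw [hdec, inner_add_right, maskedGrad_inner]
    have habs := abs_real_inner_le_norm (gradient f θ)
      (maskedGrad blk f (u t) (k t) - maskedGrad blk f θ (k t))
    have h2 := herr t ht
    rw [hGdef] at habs
    have := abs_le.mp habs
    nlinarith [norm_nonneg (maskedGrad blk f (u t) (k t) - maskedGrad blk f θ (k t))]
  have hinD : Mt - (T:ℝ) * (C₁ * G ^ 2) ≤ ⟪gradient f θ, D⟫ := by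
    rw [← hDdef, inner_sum]
    have h1 := Finset.sum_le_sum fun t ht => hinlb' t (Finset.mem_range.mp ht)
    calc Mt - (T:ℝ) * (C₁ * G ^ 2)
        = ∑ t ∈ Finset.range T, (‖maskedGrad blk f θ (k t)‖ ^ 2 - C₁ * G ^ 2) := by
          rw [Finset.sum_sub_distrib, Finset.sum_const, Finset.card_range, nsmul_eq_mul, hMtdef]
      _ ≤ _ := h1
  -- descent lemma
  have hdesc := descent_lemma f L hL.le hdiff hsmooth θ (u T)
  have huT : u T - θ = -(η • D) := by rw [tele T le_rfl, hDdef]; abel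
  rw [huT, inner_neg_right, real_inner_smul_right, norm_neg, norm_smul, Real.norm_eq_abs,
    abs_of_pos hη, mul_pow] at hdesc
  -- combine
  have e1 : η * (Mt - (T:ℝ) * (C₁ * G ^ 2)) ≤ η * ⟪gradient f θ, D⟫ :=
    mul_le_mul_of_nonneg_left hinD hη.le
  have e2 : ‖D‖ ^ 2 ≤ (T:ℝ) * (2 * Mt + (T:ℝ) * (2 * (C₁ * G) ^ 2)) :=
    hDn.trans (mul_le_mul_of_nonneg_left hNsum hT0)
  have e3 : L / 2 * (η ^ 2 * ‖D‖ ^ 2)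
      ≤ L / 2 * (η ^ 2 * ((T:ℝ) * (2 * Mt + (T:ℝ) * (2 * (C₁ * G) ^ 2)))) := by
    apply mul_le_mul_of_nonneg_left _ (by positivity)
    exact mul_le_mul_of_nonneg_left e2 (by positivity)
  have slack1 : (0:ℝ) ≤ η ^ 2 * (T:ℝ) ^ 2 * C₁ ^ 2 * G ^ 2 := by positivity
  have slack2 : (0:ℝ) ≤ η ^ 2 * (T:ℝ) * Mt := mul_nonneg (by positivity) hMt
  linarith [hdesc, e1, e3, slack1, slack2]

/-- **Descent bound for parallel (overlapping-token) Markov chain coordinate descent.**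
`Γ ≥ 1` coordinate-descent runs start from the same point `θ`, each with its own block
sequence `k_γ^0,…,k_γ^{S−1}`, producing final iterates `v γ S 0`;
`θ⁺` is their average.  For convex `L`-smooth `f` with `η ∈ (0, 1/((L+1)SQ)]`,
`f(θ⁺) − f(θ) ≤ η S Q C₁ (1 + η(L+1)SQC₁)‖∇f(θ)‖²
  + (η(η(L+1)SQ − 1)/Γ) ∑_γ ∑_{s<S} ∑_{q<Q} ‖∇_{k_γ^s} f(θ)‖²` with `C₁ = η e L S Q`. -/
theorem mtcd_overlapping_tokens_descent_bound
    {d : ℕ} (hd : 1 ≤ d) {K : Type*} [Fintype K] [DecidableEq K]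
    (blk : Fin d → K)
    (f : EuclideanSpace ℝ (Fin d) → ℝ) (L : ℝ) (hL : 0 < L)
    (hdiff : Differentiable ℝ f)
    (hconvex : ∀ x y : EuclideanSpace ℝ (Fin d), ∀ a : ℝ, 0 ≤ a → a ≤ 1 →
      f (a • x + (1 - a) • y) ≤ a * f x + (1 - a) * f y)
    (hsmooth : ∀ x y : EuclideanSpace ℝ (Fin d),
      ‖gradient f x - gradient f y‖ ≤ L * ‖x - y‖)
    (S Q : ℕ) (hS : 1 ≤ S) (hQ : 1 ≤ Q)
    (η : ℝ) (hη : 0 < η) (hηub : η ≤ 1 / ((L + 1) * S * Q))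
    (θ : EuclideanSpace ℝ (Fin d))
    (Γ : ℕ) (hΓ : 1 ≤ Γ)
    (kγ : Fin Γ → ℕ → K)
    (v : Fin Γ → ℕ → ℕ → EuclideanSpace ℝ (Fin d))
    (hinit : ∀ γ, v γ 0 0 = θ)
    (hrecq : ∀ γ, ∀ s < S, ∀ q < Q,
      v γ s (q + 1) = v γ s q - η • maskedGrad blk f (v γ s q) (kγ γ s))
    (hrecs : ∀ γ, ∀ s < S, v γ (s + 1) 0 = v γ s Q)
    (θplus : EuclideanSpace ℝ (Fin d))
    (hθplus : θplus = (Γ : ℝ)⁻¹ • ∑ γ : Fin Γ, v γ S 0)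
    (C₁ : ℝ) (hC₁ : C₁ = η * Real.exp 1 * L * S * Q) :
    f θplus - f θ
      ≤ η * S * Q * C₁ * (1 + η * (L + 1) * S * Q * C₁) * ‖gradient f θ‖ ^ 2
        + η * (η * (L + 1) * S * Q - 1) / Γ *
            ∑ γ : Fin Γ, ∑ s ∈ Finset.range S, ∑ q ∈ Finset.range Q,
              ‖maskedGrad blk f θ (kγ γ s)‖ ^ 2 := by
  have hQ0 : 0 < Q := hQ
  have hS' : (1:ℝ) ≤ S := by exact_mod_cast hS
  have hQ' : (1:ℝ) ≤ Q := by exact_mod_cast hQ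
  have hLSQpos : (0:ℝ) < (L + 1) * S * Q :=
    mul_pos (mul_pos (by linarith) (by linarith)) (by linarith)
  have hηLSQ : η * ((L + 1) * (S:ℝ) * Q) ≤ 1 := by
    have := (le_div_iff₀ hLSQpos).mp hηub; linarith
  have per : ∀ γ : Fin Γ, f (v γ S 0) - f θ
      ≤ η * S * Q * C₁ * (1 + η * (L + 1) * S * Q * C₁) * ‖gradient f θ‖ ^ 2
        + η * (η * (L + 1) * S * Q - 1) *
          ∑ s ∈ Finset.range S, ∑ q ∈ Finset.range Q,
            ‖maskedGrad blk f θ (kγ γ s)‖ ^ 2 := by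
    intro γ
    have hflat : ∀ t < S * Q,
        v γ ((t + 1) / Q) ((t + 1) % Q)
          = v γ (t / Q) (t % Q)
            - η • maskedGrad blk f (v γ (t / Q) (t % Q)) (kγ γ (t / Q)) := by
      intro t ht
      have hdm := Nat.div_add_mod t Q
      have hq : t % Q < Q := Nat.mod_lt _ hQ0
      have hs : t / Q < S := (Nat.div_lt_iff_lt_mul hQ0).mpr (by omega)
      by_cases hcase : t % Q + 1 < Q
      · have ht1 : t + 1 = (t % Q + 1) + Q * (t / Q) := by omega
        have e1 : (t + 1) / Q = t / Q := by
          rw [ht1, Nat.add_mul_div_left _ _ hQ0, Nat.div_eq_of_lt hcase, Nat.zero_add]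
        have e2 : (t + 1) % Q = t % Q + 1 := by
          rw [ht1, Nat.add_mul_mod_self_left, Nat.mod_eq_of_lt hcase]
        rw [e1, e2]
        exact hrecq γ _ hs _ hq
      · have hQeq : t % Q + 1 = Q := by omega
        have hmul2 : Q * (t / Q + 1) = Q * (t / Q) + Q := by ring
        have ht1 : t + 1 = Q * (t / Q + 1) := by omega
        have e1 : (t + 1) / Q = t / Q + 1 := by rw [ht1, Nat.mul_div_cancel_left _ hQ0]
        have e2 : (t + 1) % Q = 0 := by rw [ht1, Nat.mul_mod_right]
        rw [e1, e2, hrecs γ _ hs]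
        have h := hrecq γ _ hs _ hq
        rw [hQeq] at h
        exact h
    have h0' : v γ (0 / Q) (0 % Q) = θ := by
      rw [Nat.zero_div, Nat.zero_mod]; exact hinit γ
    have hηT : η * ((L + 1) * ((S * Q : ℕ) : ℝ)) ≤ 1 := by push_cast; nlinarith [hηLSQ]
    have hC₁' : C₁ = η * Real.exp 1 * L * ((S * Q : ℕ) : ℝ) := by
      rw [hC₁]; push_cast; ring
    have hper := per_run blk f L hL hdiff hsmooth (S * Q) η hη hηT θ
      (fun t => kγ γ (t / Q)) (fun t => v γ (t / Q) (t % Q)) h0'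
      (fun t ht => hflat t ht) C₁ hC₁'
    beta_reduce at hper
    have huT : v γ (S * Q / Q) (S * Q % Q) = v γ S 0 := by
      rw [Nat.mul_div_cancel _ hQ0, Nat.mul_mod_left]
    have hsum : ∑ t ∈ Finset.range (S * Q), ‖maskedGrad blk f θ (kγ γ (t / Q))‖ ^ 2
        = ∑ s ∈ Finset.range S, ∑ q ∈ Finset.range Q,
            ‖maskedGrad blk f θ (kγ γ s)‖ ^ 2 :=
      sum_range_mul S Q hQ0 (fun s q => ‖maskedGrad blk f θ (kγ γ s)‖ ^ 2)
    rw [huT, hsum] at hper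
    have hcast : ((S * Q : ℕ) : ℝ) = (S : ℝ) * (Q : ℝ) := by push_cast; ring
    rw [hcast] at hper
    calc f (v γ S 0) - f θ ≤ _ := hper
      _ = η * S * Q * C₁ * (1 + η * (L + 1) * S * Q * C₁) * ‖gradient f θ‖ ^ 2
          + η * (η * (L + 1) * S * Q - 1) *
            ∑ s ∈ Finset.range S, ∑ q ∈ Finset.range Q,
              ‖maskedGrad blk f θ (kγ γ s)‖ ^ 2 := by ring
  -- Jensen and averaging
  have hΓ0 : (0:ℝ) < Γ := by exact_mod_cast hΓ
  have hconvexOn : ConvexOn ℝ Set.univ f := by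
    refine ⟨convex_univ, ?_⟩
    intro x _ y _ a b ha hb hab
    have h := hconvex x y a ha (by linarith)
    rw [show (1:ℝ) - a = b by linarith] at h
    exact h
  have hjensen : f θplus ≤ ∑ γ : Fin Γ, (Γ:ℝ)⁻¹ * f (v γ S 0) := by
    have h := hconvexOn.map_sum_le (t := Finset.univ)
      (w := fun _ : Fin Γ => (Γ:ℝ)⁻¹) (p := fun γ => v γ S 0)
      (fun _ _ => by positivity)
      (by rw [Finset.sum_const, Finset.card_univ, Fintype.card_fin, nsmul_eq_mul]
          field_simp)
      (fun _ _ => Set.mem_univ _)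
    rw [hθplus, Finset.smul_sum]
    exact h
  obtain ⟨W, hW⟩ : ∃ W : Fin Γ → ℝ, ∀ γ,
      ∑ s ∈ Finset.range S, ∑ q ∈ Finset.range Q,
        ‖maskedGrad blk f θ (kγ γ s)‖ ^ 2 = W γ := ⟨_, fun _ => rfl⟩
  obtain ⟨R1, hR1⟩ : ∃ R1, η * S * Q * C₁ * (1 + η * (L + 1) * S * Q * C₁)
      * ‖gradient f θ‖ ^ 2 = R1 := ⟨_, rfl⟩
  simp only [hW, hR1] at per ⊢
  have hj2 : f θplus ≤ (Γ:ℝ)⁻¹ * ∑ γ : Fin Γ, f (v γ S 0) := by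
    rw [Finset.mul_sum]; exact hjensen
  have h2 : (Γ:ℝ)⁻¹ * ∑ γ : Fin Γ, f (v γ S 0) - f θ
      = (Γ:ℝ)⁻¹ * ∑ γ : Fin Γ, (f (v γ S 0) - f θ) := by
    rw [Finset.sum_sub_distrib, Finset.sum_const, Finset.card_univ, Fintype.card_fin,
      nsmul_eq_mul, mul_sub]
    field_simp
  have h3 : (Γ:ℝ)⁻¹ * ∑ γ : Fin Γ, (f (v γ S 0) - f θ)
      ≤ (Γ:ℝ)⁻¹ * ∑ γ : Fin Γ, (R1 + η * (η * (L + 1) * S * Q - 1) * W γ) :=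
    mul_le_mul_of_nonneg_left (Finset.sum_le_sum fun γ _ => per γ) (by positivity)
  have h4 : (Γ:ℝ)⁻¹ * ∑ γ : Fin Γ, (R1 + η * (η * (L + 1) * S * Q - 1) * W γ)
      = R1 + η * (η * (L + 1) * S * Q - 1) / Γ * ∑ γ : Fin Γ, W γ := by
    rw [Finset.sum_add_distrib, Finset.sum_const, Finset.card_univ, Fintype.card_fin,
      nsmul_eq_mul, ← Finset.mul_sum]
    field_simp
  linarith [hj2, h2, h3, h4]
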